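/- There exists a constant C > 0 such that for all sufficiently large natural numbers N and all real x with |x| ≤ N, one has 1 − C/N ≤ ∑_{n=−2N}^{2N} sinc(x−n) ≤ 1 + C/N. -/

import Mathlib

open Real hiding sinc sinc_neg
open Topology

noncomputable def sinc (t : ℝ) : ℝ := if t = 0 then 1 else Real.sin (π * t) / (π * t)

lemma exp_sub_exp (z : ℂ) :
    Complex.exp (z * Complex.I) - Complex.exp (-z * Complex.I) = 2 * Complex.I * Complex.sin z := by
  rw [Complex.sin]
  linear_combination (Complex.exp (z * Complex.I) - Complex.exp (-z * Complex.I)) * Complex.I_sq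

lemma sinc_neg (t : ℝ) : sinc (-t) = sinc t := by
  unfold sinc
  rcases eq_or_ne t 0 with h | h
  · simp [h]
  · rw [if_neg (by simpa using h), if_neg h, mul_neg, Real.sin_neg]
    field_simp

lemma integral_exp_sinc (v : ℝ) (hv : v ≠ 0) :
    ∫ x in (-(1:ℝ)/2)..(1/2), Complex.exp (2 * π * Complex.I * v * x) = (sinc v : ℂ) := by
  have hc : (2 * π * Complex.I * v : ℂ) ≠ 0 := by
    simp [Real.pi_ne_zero, hv, Complex.I_ne_zero, Complex.ofReal_ne_zero]
  rw [show (fun x : ℝ => Complex.exp (2 * π * Complex.I * v * x))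
      = fun x : ℝ => Complex.exp ((2 * π * Complex.I * v) * x) from rfl]
  rw [integral_exp_mul_complex hc]
  have h1 : (2 * π * Complex.I * v) * ((1:ℝ)/2 : ℝ) = ((π * v : ℝ) : ℂ) * Complex.I := by
    push_cast; ring
  have h2 : (2 * π * Complex.I * v) * ((-(1:ℝ)/2 : ℝ)) = -((π * v : ℝ) : ℂ) * Complex.I := by
    push_cast; ring
  rw [h1, h2, exp_sub_exp ((π * v : ℝ) : ℂ)]
  rw [sinc, if_neg hv, Complex.ofReal_div, Complex.ofReal_sin, Complex.ofReal_mul]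
  have hπ : ((π : ℝ) : ℂ) ≠ 0 := by simp [Real.pi_ne_zero]
  have hvC : ((v : ℝ) : ℂ) ≠ 0 := by simp [hv]
  field_simp [Complex.I_ne_zero]

lemma coeff_eq (u : ℝ) (hu0 : 0 < u) (hu1 : u < 1) (n : ℤ) :
    fourierCoeffOn (by norm_num : (-(1:ℝ)/2) < 1/2) (fun t : ℝ => Complex.cos (2 * π * u * t)) n
      = (((sinc (u - n) + sinc (u + n)) / 2 : ℝ) : ℂ) := by
  have hun : u - (n:ℝ) ≠ 0 := by
    intro h
    have : (n:ℝ) = u := by linarith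
    rcases lt_trichotomy n 0 with h' | h' | h'
    · have : (n:ℝ) < 0 := by exact_mod_cast h'
      linarith
    · subst h'; simp at this; linarith
    · have : (1:ℝ) ≤ (n:ℝ) := by exact_mod_cast h'
      linarith
  have hup : u + (n:ℝ) ≠ 0 := by
    intro h
    have : (n:ℝ) = -u := by linarith
    rcases lt_trichotomy n 0 with h' | h' | h'
    · have h2' : n ≤ -1 := by omega
      have h2 : (n:ℝ) ≤ -1 := by exact_mod_cast h2'
      linarith
    · subst h'; simp at this; linarith
    · have : (1:ℝ) ≤ (n:ℝ) := by exact_mod_cast h'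
      linarith
  rw [fourierCoeffOn_eq_integral]
  have hT : ((1:ℝ)/2 - (-(1:ℝ)/2)) = 1 := by norm_num
  have hint : ∀ x : ℝ, fourier (-n) (x : AddCircle ((1:ℝ)/2 - (-(1:ℝ)/2))) •
      Complex.cos (2 * π * u * x)
      = (Complex.exp (2 * π * Complex.I * ((u - n : ℝ) : ℂ) * x)
          + Complex.exp (2 * π * Complex.I * ((-(u + n) : ℝ) : ℂ) * x)) / 2 := by
    intro x
    rw [fourier_coe_apply, hT]
    simp only [Complex.ofReal_one]
    rw [Complex.cos, smul_eq_mul, div_one, mul_comm, div_mul_eq_mul_div]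
    congr 1
    rw [add_mul, ← Complex.exp_add, ← Complex.exp_add]
    congr 1 <;> push_cast <;> ring
  simp_rw [hint]
  have cont : ∀ v : ℝ, Continuous fun x : ℝ => Complex.exp (2 * π * Complex.I * (v : ℂ) * x) := by
    intro v
    exact Complex.continuous_exp.comp (continuous_const.mul Complex.continuous_ofReal)
  rw [intervalIntegral.integral_div, intervalIntegral.integral_add
      ((cont (u - n)).intervalIntegrable _ _) ((cont (-(u + n))).intervalIntegrable _ _)]
  rw [integral_exp_sinc (u - n) hun, integral_exp_sinc (-(u + n)) (by intro h; apply hup; linarith)]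
  rw [sinc_neg]
  norm_num

lemma sinc_eq (u : ℝ) (n : ℤ) (h : u - (n:ℝ) ≠ 0) :
    sinc (u - n) = (-1:ℝ)^n * Real.sin (π * u) / (π * (u - n)) := by
  rw [sinc, if_neg h]
  have : π * (u - n) = -((n:ℝ) * π - π * u) := by ring
  rw [this, Real.sin_neg, Real.sin_int_mul_pi_sub]
  have h2 : π * (u - (n:ℝ)) ≠ 0 := by
    intro h'; rcases mul_eq_zero.mp h' with h'' | h''
    · exact Real.pi_ne_zero h''
    · exact h h''
  field_simp

lemma neg_one_zpow_abs (n : ℤ) : |(-1:ℝ)^n| = 1 := by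
  rcases Int.even_or_odd n with h | h
  · rw [h.neg_one_zpow]; norm_num
  · rw [h.neg_one_zpow]; norm_num

lemma neg_one_zpow_neg (n : ℤ) : (-1:ℝ)^(-n) = (-1:ℝ)^n := by
  rcases Int.even_or_odd n with h | h
  · rw [h.neg_one_zpow, (h.neg : Even (-n)).neg_one_zpow]
  · rw [h.neg_one_zpow, (h.neg : Odd (-n)).neg_one_zpow]

lemma r_eq (u : ℝ) (hu0 : 0 < u) (hu1 : u < 1) (n : ℤ) :
    (sinc (u - n) + sinc (u + n)) / 2
      = (-1:ℝ)^n * (Real.sin (π * u) * u) / (π * (u^2 - (n:ℝ)^2)) := by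
  have hun : u - (n:ℝ) ≠ 0 := by
    intro h
    have h1 : (n:ℝ) = u := by linarith
    rcases lt_trichotomy n 0 with h' | h' | h'
    · have h2' : n ≤ -1 := by omega
      have : (n:ℝ) ≤ -1 := by exact_mod_cast h2'
      linarith
    · subst h'; simp at h1; linarith
    · have h2' : 1 ≤ n := by omega
      have : (1:ℝ) ≤ (n:ℝ) := by exact_mod_cast h2'
      linarith
  have hup : u - ((-n : ℤ):ℝ) ≠ 0 := by
    push_cast
    intro h
    have h1 : (n:ℝ) = -u := by linarith
    rcases lt_trichotomy n 0 with h' | h' | h'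
    · have h2' : n ≤ -1 := by omega
      have : (n:ℝ) ≤ -1 := by exact_mod_cast h2'
      linarith
    · subst h'; simp at h1; linarith
    · have h2' : 1 ≤ n := by omega
      have : (1:ℝ) ≤ (n:ℝ) := by exact_mod_cast h2'
      linarith
  have e2 : sinc (u + n) = (-1:ℝ)^n * Real.sin (π * u) / (π * (u + n)) := by
    have := sinc_eq u (-n) hup
    push_cast at this
    rw [sub_neg_eq_add] at this
    rw [this, neg_one_zpow_neg]
  rw [sinc_eq u n hun, e2]
  have hπ : (π : ℝ) ≠ 0 := Real.pi_ne_zero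
  have hup' : u + (n:ℝ) ≠ 0 := by push_cast at hup; intro h; apply hup; linarith
  have hsq : u^2 - (n:ℝ)^2 ≠ 0 := by
    have e : u^2 - (n:ℝ)^2 = (u - n) * (u + n) := by ring
    rw [e]; exact mul_ne_zero hun hup'
  field_simp
  ring

lemma r_bound (u : ℝ) (hu0 : 0 < u) (hu1 : u < 1) (n : ℤ) (hn : 2 ≤ |n|) :
    |(sinc (u - n) + sinc (u + n)) / 2| ≤ 1 / (π * ((n:ℝ)^2 - 1)) := by
  have hn2 : (4:ℝ) ≤ (n:ℝ)^2 := by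
    have : (2:ℤ)^2 ≤ n^2 := by nlinarith [abs_nonneg n, sq_abs n]
    exact_mod_cast this
  have hs : 0 ≤ Real.sin (π * u) :=
    Real.sin_nonneg_of_nonneg_of_le_pi (by positivity)
      (by nlinarith [Real.pi_pos])
  rw [r_eq u hu0 hu1 n, abs_div, abs_mul, neg_one_zpow_abs, one_mul]
  have hden : |π * (u^2 - (n:ℝ)^2)| = π * ((n:ℝ)^2 - u^2) := by
    rw [abs_mul, abs_of_pos Real.pi_pos, abs_of_neg (by nlinarith : u^2 - (n:ℝ)^2 < 0)]
    ring
  rw [hden]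
  have hnum : |Real.sin (π * u) * u| ≤ 1 := by
    rw [abs_mul]
    have h1 : |Real.sin (π * u)| ≤ 1 := Real.abs_sin_le_one _
    have h2 : |u| ≤ 1 := by rw [abs_of_pos hu0]; linarith
    nlinarith [abs_nonneg (Real.sin (π * u)), abs_nonneg u]
  apply div_le_div₀ (by norm_num) hnum (by nlinarith [Real.pi_pos])
  have : (1:ℝ) ≥ u^2 := by nlinarith
  nlinarith [Real.pi_pos]

lemma hasSum_main (u : ℝ) (hu0 : 0 < u) (hu1 : u < 1) :
    HasSum (fun n : ℤ => (sinc (u - n) + sinc (u + n)) / 2) 1 := by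
  haveI : Fact ((0:ℝ) < 1) := ⟨one_pos⟩
  set f : ℝ → ℂ := fun t => Complex.cos (2 * π * u * t) with hf
  have hper : f (-(1:ℝ)/2) = f (-(1:ℝ)/2 + 1) := by
    simp only [hf]
    have h1 : (2 * (π:ℂ) * (u:ℂ) * ((-(1:ℝ)/2 + 1 : ℝ) : ℂ)) = -(2 * (π:ℂ) * (u:ℂ) * ((-(1:ℝ)/2 : ℝ) : ℂ)) := by
      push_cast; ring
    rw [h1, Complex.cos_neg]
  have hcont : ContinuousOn f (Set.Icc (-(1:ℝ)/2) (-(1:ℝ)/2 + 1)) := by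
    apply Continuous.continuousOn
    exact Complex.continuous_cos.comp (continuous_const.mul Complex.continuous_ofReal)
  let F : C(AddCircle (1:ℝ), ℂ) :=
    ⟨AddCircle.liftIco 1 (-(1:ℝ)/2) f, AddCircle.liftIco_continuous hper hcont⟩
  have hb : (-(1:ℝ)/2 + 1) = 1/2 := by norm_num
  have hc : ∀ n : ℤ, fourierCoeff (⇑F) n
      = (((sinc (u - n) + sinc (u + n)) / 2 : ℝ) : ℂ) := by
    intro n
    have key : ∀ (b₁ b₂ : ℝ) (h₁ : (-(1:ℝ)/2) < b₁) (h₂ : (-(1:ℝ)/2) < b₂), b₁ = b₂ →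
        fourierCoeffOn h₁ f n = fourierCoeffOn h₂ f n := by
      rintro b₁ b₂ h₁ h₂ rfl; rfl
    calc fourierCoeff (⇑F) n
        = fourierCoeffOn (lt_add_of_pos_right (-(1:ℝ)/2) (Fact.out : (0:ℝ) < 1)) f n :=
          fourierCoeff_liftIco_eq (T := 1) (a := -(1:ℝ)/2) f n
      _ = fourierCoeffOn (by norm_num : (-(1:ℝ)/2) < 1/2) f n := key _ _ _ _ (by norm_num)
      _ = (((sinc (u - n) + sinc (u + n)) / 2 : ℝ) : ℂ) := coeff_eq u hu0 hu1 n
  have hsum : Summable (fourierCoeff (⇑F)) := by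
    apply Summable.of_norm_bounded_eventually (g := fun n : ℤ => 1 / ((n:ℝ))^2)
    · exact (summable_one_div_int_pow).mpr one_lt_two
    · rw [Filter.eventually_cofinite]
      apply Set.Finite.subset (Finset.finite_toSet (Finset.Icc (-1 : ℤ) 1))
      intro n hn
      simp only [Set.mem_setOf_eq, not_le] at hn
      simp only [Finset.coe_Icc, Set.mem_Icc]
      by_contra hcon
      have hcon2 : n ≤ -2 ∨ 2 ≤ n := by omega
      have habs : 2 ≤ |n| := by
        rcases hcon2 with h | h
        · rw [abs_of_neg (by omega : n < 0)]; omega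
        · rw [abs_of_pos (by omega : 0 < n)]; omega
      apply absurd hn
      push_neg
      rw [hc n, Complex.norm_real, Real.norm_eq_abs]
      refine le_trans (r_bound u hu0 hu1 n habs) ?_
      have hn2 : (4:ℝ) ≤ (n:ℝ)^2 := by
        have : (2:ℤ)^2 ≤ n^2 := by nlinarith [sq_abs n]
        exact_mod_cast this
      rw [div_le_div_iff₀ (by nlinarith [Real.pi_pos]) (by nlinarith)]
      nlinarith [Real.pi_gt_three]
  have hps := has_pointwise_sum_fourier_series_of_summable hsum (0 : AddCircle (1:ℝ))
  have hF0 : F (0 : AddCircle (1:ℝ)) = 1 := by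
    show AddCircle.liftIco 1 (-(1:ℝ)/2) f (0 : AddCircle (1:ℝ)) = 1
    have h0 : ((0:ℝ) : AddCircle (1:ℝ)) = (0 : AddCircle (1:ℝ)) := by norm_cast
    rw [← h0, AddCircle.liftIco_coe_apply (by rw [hb]; constructor <;> norm_num)]
    simp only [hf]
    norm_num
  rw [hF0] at hps
  simp only [fourier_eval_zero, smul_eq_mul, mul_one, hc] at hps
  rw [show (1:ℂ) = ((1:ℝ):ℂ) by norm_num] at hps
  exact Complex.hasSum_ofReal.mp hps

lemma sum_Icc_neg (p q : ℤ) (f : ℤ → ℝ) :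
    ∑ n ∈ Finset.Icc p q, f (-n) = ∑ n ∈ Finset.Icc (-q) (-p), f n := by
  apply Finset.sum_nbij' (fun n => -n) (fun n => -n) <;>
    simp_all [Finset.mem_Icc] <;> omega

lemma tele (c : ℤ) (hc : 1 ≤ c) : ∀ m : ℤ, c ≤ m →
    ∑ n ∈ Finset.Icc (c+1) m, ((1:ℝ)/((n:ℝ)-1) - 1/(n:ℝ)) = 1/(c:ℝ) - 1/(m:ℝ) := by
  refine Int.le_induction ?_ ?_
  · rw [Finset.Icc_eq_empty (by omega)]; simp
  · intro m hm ih
    have hins : Finset.Icc (c+1) (m+1) = insert (m+1) (Finset.Icc (c+1) m) := by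
      ext x; simp only [Finset.mem_Icc, Finset.mem_insert]; omega
    rw [hins, Finset.sum_insert (by simp only [Finset.mem_Icc]; omega), ih]
    have h1 : ((m+1 : ℤ) : ℝ) = (m:ℝ) + 1 := by push_cast; ring
    rw [h1]
    have hm0 : (0:ℝ) < (m:ℝ) := by
      have : (0:ℤ) < m := by omega
      exact_mod_cast this
    have hm0' : (m:ℝ) ≠ 0 := hm0.ne'
    simp only [add_sub_cancel_right]
    field_simp
    ring

lemma bnd_mono (u : ℝ) (hu0 : 0 < u) (hu1 : u < 1) (n : ℤ) (hn : 3 ≤ |n|) :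
    |(sinc (u - n) + sinc (u + n)) / 2|
      ≤ (1/π) * ((1:ℝ)/((|n|:ℝ)-1) - 1/(|n|:ℝ)) := by
  refine le_trans (r_bound u hu0 hu1 n (by omega)) ?_
  have h2 : (3:ℝ) ≤ (|n|:ℝ) := by exact_mod_cast hn
  have hsq : ((n:ℝ))^2 = ((|n|:ℝ))^2 := by
    have := sq_abs n
    have : ((n^2 : ℤ) : ℝ) = (((|n|)^2 : ℤ) : ℝ) := by exact_mod_cast this.symm
    push_cast at this
    linarith
  rw [hsq]
  set a : ℝ := (|n|:ℝ) with ha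
  have key : (1:ℝ)/(a-1) - 1/a = 1/(a*(a-1)) := by
    rw [div_sub_div _ _ (by nlinarith : a - 1 ≠ 0) (by nlinarith : a ≠ 0),
      show (1*a - (a-1)*1 : ℝ) = 1 by ring, mul_comm]
  rw [key, one_div_mul_one_div]
  exact one_div_le_one_div_of_le (mul_pos Real.pi_pos (by nlinarith))
    (mul_le_mul_of_nonneg_left (by nlinarith) Real.pi_pos.le)

lemma sym_bound (u : ℝ) (hu0 : 0 < u) (hu1 : u < 1) (c : ℤ) (hc : 2 ≤ c) :
    |∑ n ∈ Finset.Icc (-c) c, sinc (u - n) - 1| ≤ 2 / (π * c) := by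
  set r : ℤ → ℝ := fun n => (sinc (u - n) + sinc (u + n)) / 2 with hr
  -- symmetric sum of sinc equals sum of r
  have hsym : ∀ d : ℤ, 0 ≤ d → ∑ n ∈ Finset.Icc (-d) d, r n = ∑ n ∈ Finset.Icc (-d) d, sinc (u - n) := by
    intro d hd
    have h1 : ∑ n ∈ Finset.Icc (-d) d, sinc (u + n)
        = ∑ n ∈ Finset.Icc (-d) d, sinc (u - n) := by
      have := sum_Icc_neg (-d) d (fun n => sinc (u - n))
      simp only [neg_neg] at this
      rw [← this]
      apply Finset.sum_congr rfl
      intro n _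
      push_cast
      rw [sub_neg_eq_add]
    calc ∑ n ∈ Finset.Icc (-d) d, r n
        = ((∑ n ∈ Finset.Icc (-d) d, sinc (u - n)) + ∑ n ∈ Finset.Icc (-d) d, sinc (u + n)) / 2 := by
          rw [← Finset.sum_add_distrib, ← Finset.sum_div]
      _ = _ := by rw [h1]; ring
  -- tendsto
  have hmono : Monotone (fun m : ℕ => Finset.Icc (-(c + m) : ℤ) (c + m)) := by
    intro m₁ m₂ h
    have h' : (m₁:ℤ) ≤ m₂ := by exact_mod_cast h
    apply Finset.Icc_subset_Icc <;> omega
  have hcov : ∀ x : ℤ, ∃ m : ℕ, x ∈ Finset.Icc (-(c + m) : ℤ) (c + m) := by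
    intro x
    refine ⟨x.natAbs, ?_⟩
    simp only [Finset.mem_Icc]
    omega
  have hten : Filter.Tendsto (fun m : ℕ => ∑ n ∈ Finset.Icc (-(c + m) : ℤ) (c + m), r n)
      Filter.atTop (𝓝 1) :=
    (hasSum_main u hu0 hu1).comp (Filter.tendsto_atTop_finset_of_monotone hmono hcov)
  -- per-m bound
  have hbound : ∀ m : ℕ,
      |∑ n ∈ Finset.Icc (-c) c, r n - ∑ n ∈ Finset.Icc (-(c + m) : ℤ) (c + m), r n|
        ≤ 2 / (π * c) := by
    intro m
    have hsub : Finset.Icc (-c) c ⊆ Finset.Icc (-(c + m) : ℤ) (c + m) := by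
      apply Finset.Icc_subset_Icc <;> omega
    rw [abs_sub_comm, ← Finset.sum_sdiff_eq_sub hsub]
    set sd := Finset.Icc (-(c + m) : ℤ) (c + m) \ Finset.Icc (-c) c with hsd
    set B : ℤ → ℝ := fun n => (1/π) * ((1:ℝ)/((|n|:ℝ)-1) - 1/(|n|:ℝ)) with hB
    have habs3 : ∀ n : ℤ, n ∈ sd → 3 ≤ |n| := by
      intro n hn
      simp only [hsd, Finset.mem_sdiff, Finset.mem_Icc, not_and, not_le] at hn
      have h' : n ≤ -(c+1) ∨ c+1 ≤ n := by omega
      rcases h' with h | h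
      · rw [abs_of_neg (by omega)]; omega
      · rw [abs_of_pos (by omega)]; omega
    have hBnonneg : ∀ n : ℤ, 3 ≤ |n| → 0 ≤ B n := by
      intro n hn
      have h3 : (3:ℝ) ≤ (|n|:ℝ) := by exact_mod_cast hn
      have : (1:ℝ)/(|n|:ℝ) ≤ 1/((|n|:ℝ)-1) :=
        one_div_le_one_div_of_le (by linarith) (by linarith)
      apply mul_nonneg (by positivity) (by linarith)
    refine le_trans (Finset.abs_sum_le_sum_abs _ _) ?_
    have step1 : ∑ n ∈ sd, |r n| ≤ ∑ n ∈ sd, B n := by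
      apply Finset.sum_le_sum
      intro n hn
      exact bnd_mono u hu0 hu1 n (habs3 n hn)
    have hsubU : sd ⊆ Finset.Icc (-(c+m) : ℤ) (-(c+1)) ∪ Finset.Icc (c+1) (c+m) := by
      intro n hn
      simp only [hsd, Finset.mem_sdiff, Finset.mem_Icc, not_and, not_le] at hn
      simp only [Finset.mem_union, Finset.mem_Icc]
      omega
    have step2 : ∑ n ∈ sd, B n
        ≤ ∑ n ∈ (Finset.Icc (-(c+m) : ℤ) (-(c+1)) ∪ Finset.Icc (c+1) (c+m)), B n := by
      apply Finset.sum_le_sum_of_subset_of_nonneg hsubU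
      intro n hn _
      apply hBnonneg
      simp only [Finset.mem_union, Finset.mem_Icc] at hn
      rcases hn with h | h
      · rw [abs_of_neg (by omega)]; omega
      · rw [abs_of_pos (by omega)]; omega
    have hdisj : Disjoint (Finset.Icc (-(c+m) : ℤ) (-(c+1))) (Finset.Icc (c+1) (c+m)) := by
      rw [Finset.disjoint_left]
      intro n hn hn'
      simp only [Finset.mem_Icc] at hn hn'
      omega
    have hnegside : ∑ n ∈ Finset.Icc (-(c+m) : ℤ) (-(c+1)), B n
        = ∑ n ∈ Finset.Icc (c+1) (c+m), B n := by
      have := sum_Icc_neg (c+1) (c+m) B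
      have hBev : ∀ n, B (-n) = B n := by intro n; simp [hB, abs_neg]
      simp only [hBev] at this
      rw [this]
    have hposside : ∑ n ∈ Finset.Icc (c+1) (c+m), B n = (1/π) * (1/(c:ℝ) - 1/((c+m : ℤ):ℝ)) := by
      rw [← Finset.mul_sum]
      congr 1
      rw [← tele c (by omega) (c+m) (by omega)]
      apply Finset.sum_congr rfl
      intro n hn
      simp only [Finset.mem_Icc] at hn
      have hnpos : (0:ℝ) < (n:ℝ) := by exact_mod_cast (by omega : (0:ℤ) < n)
      rw [abs_of_pos hnpos]
    have hfin : (1/π) * (1/(c:ℝ) - 1/((c+m : ℤ):ℝ)) ≤ (1/π) * (1/(c:ℝ)) := by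
      apply mul_le_mul_of_nonneg_left _ (by positivity)
      have : (0:ℝ) < ((c+m : ℤ):ℝ) := by
        have : (0:ℤ) < c + m := by omega
        exact_mod_cast this
      have : (0:ℝ) ≤ 1/((c+m : ℤ):ℝ) := by positivity
      linarith
    have hc0 : (0:ℝ) < (c:ℝ) := by exact_mod_cast (by omega : (0:ℤ) < c)
    calc ∑ n ∈ sd, |r n| ≤ ∑ n ∈ (Finset.Icc (-(c+m) : ℤ) (-(c+1)) ∪ Finset.Icc (c+1) (c+m)), B n :=
          le_trans step1 step2
      _ = ∑ n ∈ Finset.Icc (-(c+m) : ℤ) (-(c+1)), B n + ∑ n ∈ Finset.Icc (c+1) (c+m), B n :=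
          Finset.sum_union hdisj
      _ = 2 * ((1/π) * (1/(c:ℝ) - 1/((c+m : ℤ):ℝ))) := by rw [hnegside, hposside]; ring
      _ ≤ 2 * ((1/π) * (1/(c:ℝ))) := by linarith [hfin]
      _ = 2 / (π * c) := by field_simp
  have hlim : Filter.Tendsto
      (fun m : ℕ => |∑ n ∈ Finset.Icc (-c) c, r n - ∑ n ∈ Finset.Icc (-(c + m) : ℤ) (c + m), r n|)
      Filter.atTop (𝓝 |∑ n ∈ Finset.Icc (-c) c, r n - 1|) :=
    (Filter.Tendsto.sub tendsto_const_nhds hten).abs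
  have hfinal := le_of_tendsto hlim (Filter.Eventually.of_forall hbound)
  rw [hsym c (by omega)] at hfinal
  exact hfinal

lemma alt_main (g : ℤ → ℝ) (a₀ b : ℤ)
    (hpos : ∀ n, a₀ ≤ n → 0 ≤ g n) (hmono : ∀ n, a₀ ≤ n → g (n+1) ≤ g n) :
    ∀ a, a ≤ b + 1 → a₀ ≤ a →
      0 ≤ (-1:ℝ)^a * ∑ n ∈ Finset.Icc a b, (-1:ℝ)^n * g n ∧
      (-1:ℝ)^a * ∑ n ∈ Finset.Icc a b, (-1:ℝ)^n * g n ≤ g a := by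
  refine Int.le_induction_down ?_ ?_
  · intro h0
    rw [Finset.Icc_eq_empty (by omega)]
    simp only [Finset.sum_empty, mul_zero]
    exact ⟨le_refl 0, hpos _ h0⟩
  · intro n hn ih h0
    have hIH := ih (by omega)
    have hins : Finset.Icc (n-1) b = insert (n-1) (Finset.Icc n b) := by
      ext x; simp only [Finset.mem_Icc, Finset.mem_insert]; omega
    rw [hins, Finset.sum_insert (by simp only [Finset.mem_Icc]; omega)]
    have hsq : (-1:ℝ)^(n-1) * (-1:ℝ)^(n-1) = 1 := by
      rw [← zpow_add₀ (by norm_num : (-1:ℝ) ≠ 0)]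
      have : Even (n - 1 + (n - 1)) := ⟨n - 1, by ring⟩
      exact this.neg_one_zpow
    have hflip : (-1:ℝ)^(n-1) = -(-1:ℝ)^n := by
      rw [zpow_sub_one₀ (by norm_num : (-1:ℝ) ≠ 0)]
      norm_num
    set S := ∑ n ∈ Finset.Icc n b, (-1:ℝ)^n * g n with hS
    have hexp : (-1:ℝ)^(n-1) * ((-1:ℝ)^(n-1) * g (n-1) + S)
        = g (n-1) - (-1:ℝ)^n * S := by
      rw [mul_add, ← mul_assoc, hsq, one_mul, hflip]
      ring
    rw [hexp]
    have hg : g n ≤ g (n-1) := by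
      have := hmono (n-1) h0
      simpa using this
    constructor
    · have := hIH.2
      linarith
    · have := hIH.1
      linarith

lemma alt_abs (g : ℤ → ℝ) (a b : ℤ)
    (hpos : ∀ n, a ≤ n → 0 ≤ g n) (hmono : ∀ n, a ≤ n → g (n+1) ≤ g n)
    (hab : a ≤ b + 1) :
    |∑ n ∈ Finset.Icc a b, (-1:ℝ)^n * g n| ≤ g a := by
  have h := alt_main g a b hpos hmono a hab le_rfl
  have habs : |∑ n ∈ Finset.Icc a b, (-1:ℝ)^n * g n|
      = |(-1:ℝ)^a * ∑ n ∈ Finset.Icc a b, (-1:ℝ)^n * g n| := by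
    rw [abs_mul, neg_one_zpow_abs, one_mul]
  rw [habs, abs_of_nonneg h.1]
  exact h.2

lemma sinc_int (m : ℤ) (hm : m ≠ 0) : sinc (m:ℝ) = 0 := by
  rw [sinc, if_neg (by exact_mod_cast hm)]
  rw [mul_comm, Real.sin_int_mul_pi]
  simp

lemma sum_eq_one_int (k M : ℤ) (h : k ∈ Finset.Icc (-M) M) :
    ∑ n ∈ Finset.Icc (-M) M, sinc ((k:ℝ) - n) = 1 := by
  rw [Finset.sum_eq_single_of_mem k h]
  · simp [sinc]
  · intro n _ hne
    have : ((k:ℝ) - n) = ((k - n : ℤ) : ℝ) := by push_cast; ring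
    rw [this, sinc_int _ (by omega)]

lemma sum_shift (x : ℝ) (k A B : ℤ) :
    ∑ n ∈ Finset.Icc A B, sinc (x - n) = ∑ m ∈ Finset.Icc (A - k) (B - k), sinc (x - k - m) := by
  apply Finset.sum_nbij' (fun n => n - k) (fun m => m + k) <;>
    simp_all [Finset.mem_Icc] <;> first
      | omega
      | (intro n h1 h2; congr 1; push_cast; ring)

lemma sum_reflect (x : ℝ) (M : ℤ) :
    ∑ n ∈ Finset.Icc (-M) M, sinc (x - n) = ∑ n ∈ Finset.Icc (-M) M, sinc (-x - n) := by
  have h1 : ∀ n : ℤ, sinc (x - n) = sinc (-x - (-n : ℤ)) := by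
    intro n
    rw [← sinc_neg (x - n)]
    congr 1
    push_cast
    ring
  calc ∑ n ∈ Finset.Icc (-M) M, sinc (x - n)
      = ∑ n ∈ Finset.Icc (-M) M, sinc (-x - ((-n : ℤ) : ℝ)) := by
        apply Finset.sum_congr rfl; intro n _; exact h1 n
    _ = ∑ n ∈ Finset.Icc (-M) M, sinc (-x - n) := by
        have := sum_Icc_neg (-M) M (fun n => sinc (-x - n))
        simp only [neg_neg] at this
        exact this

lemma key_bound (N : ℕ) (hN : 4 ≤ N) (x : ℝ) (hx0 : 0 ≤ x) (hx : x ≤ N) :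
    |∑ n ∈ Finset.Icc (-(2 * N : ℤ)) (2 * N), sinc (x - n) - 1| ≤ 2 / (N : ℝ) := by
  have hNR : (0:ℝ) < (N:ℝ) := by
    have : 0 < N := by omega
    exact_mod_cast this
  set k : ℤ := ⌊x⌋ with hk
  have hk0 : 0 ≤ k := Int.floor_nonneg.mpr hx0
  have hkx : (k:ℝ) ≤ x := Int.floor_le x
  have hkN : k ≤ (N:ℤ) := by
    have : (k:ℝ) ≤ (N:ℝ) := le_trans hkx hx
    exact_mod_cast this
  set u : ℝ := x - k with hu
  have hu0 : 0 ≤ u := by simp [hu]; linarith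
  have hu1 : u < 1 := by
    have := Int.lt_floor_add_one x
    simp only [hu]
    linarith
  rcases eq_or_lt_of_le hu0 with hu0' | hu0'
  · -- x = k integer
    have hxk : x = (k:ℝ) := by simp only [hu] at hu0'; linarith
    rw [hxk, sum_eq_one_int k (2*N) (by simp only [Finset.mem_Icc]; omega)]
    simp only [sub_self, abs_zero]
    positivity
  · -- 0 < u < 1
    have hc2 : (2:ℤ) ≤ 2*(N:ℤ) - k := by omega
    set c : ℤ := 2*(N:ℤ) - k with hc
    have hcN : (N:ℤ) ≤ c := by omega
    have hshift := sum_shift x k (-(2 * N : ℤ)) (2 * N)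
    have hxku : x - (k:ℝ) = u := by simp [hu]
    rw [hxku] at hshift
    -- split the interval
    have hsplit : Finset.Icc (-(2 * N : ℤ) - k) (2 * N - k)
        = Finset.Icc (-(2 * N : ℤ) - k) (-c - 1) ∪ Finset.Icc (-c) c := by
      ext n; simp only [Finset.mem_Icc, Finset.mem_union]; omega
    have hdisj : Disjoint (Finset.Icc (-(2 * N : ℤ) - k) (-c - 1)) (Finset.Icc (-c) c) := by
      rw [Finset.disjoint_left]
      intro n hn hn'
      simp only [Finset.mem_Icc] at hn hn'
      omega
    rw [hshift, hsplit, Finset.sum_union hdisj]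
    -- tail part R
    set R := ∑ m ∈ Finset.Icc (-(2 * N : ℤ) - k) (-c - 1), sinc (u - m) with hR
    have hRneg : R = ∑ m ∈ Finset.Icc (c + 1) (2 * N + k), sinc (u + m) := by
      have := sum_Icc_neg (c + 1) (2 * N + k) (fun m => sinc (u - m))
      have e1 : -(2 * (N:ℤ) + k) = -(2 * N : ℤ) - k := by ring
      have e2 : -(c + 1) = -c - 1 := by ring
      rw [e1, e2] at this
      rw [hR, ← this]
      apply Finset.sum_congr rfl
      intro m _
      push_cast
      rw [sub_neg_eq_add]
    have hg : ∀ m : ℤ, c + 1 ≤ m → sinc (u + m) = (-1:ℝ)^m * (Real.sin (π * u) / (π * (u + m))) := by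
      intro m hm
      have hne : u - ((-m : ℤ):ℝ) ≠ 0 := by
        push_cast
        have hm' : (1:ℝ) ≤ (m:ℝ) := by exact_mod_cast (by omega : (1:ℤ) ≤ m)
        intro hcon
        nlinarith
      have := sinc_eq u (-m) hne
      push_cast at this
      rw [sub_neg_eq_add] at this
      rw [this, neg_one_zpow_neg]
      ring
    have hRbound : |R| ≤ 1 / (π * c) := by
      rw [hRneg]
      have hsum_eq : ∑ m ∈ Finset.Icc (c + 1) (2 * N + k), sinc (u + m)
          = ∑ m ∈ Finset.Icc (c + 1) (2 * N + k), (-1:ℝ)^m * (Real.sin (π * u) / (π * (u + m))) := by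
        apply Finset.sum_congr rfl
        intro m hm
        simp only [Finset.mem_Icc] at hm
        exact hg m hm.1
      rw [hsum_eq]
      have hsin0 : 0 ≤ Real.sin (π * u) :=
        Real.sin_nonneg_of_nonneg_of_le_pi (by positivity)
          (by nlinarith [Real.pi_pos])
      have hsin1 : Real.sin (π * u) ≤ 1 := Real.sin_le_one _
      have hpos : ∀ m : ℤ, c + 1 ≤ m → 0 ≤ Real.sin (π * u) / (π * (u + m)) := by
        intro m hm
        have hm' : (1:ℝ) ≤ (m:ℝ) := by exact_mod_cast (by omega : (1:ℤ) ≤ m)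
        apply div_nonneg hsin0
        have : (0:ℝ) < u + m := by linarith
        positivity
      set g : ℤ → ℝ := fun m => Real.sin (π * u) / (π * (u + m)) with hgdef
      have hmono : ∀ m : ℤ, c + 1 ≤ m → g (m + 1) ≤ g m := by
        intro m hm
        have hm' : (1:ℝ) ≤ (m:ℝ) := by exact_mod_cast (by omega : (1:ℤ) ≤ m)
        simp only [hgdef]
        push_cast
        apply div_le_div_of_nonneg_left hsin0
        · nlinarith [Real.pi_pos]
        · nlinarith [Real.pi_pos]
      have habs := alt_abs g (c + 1) (2 * N + k) hpos hmono (by omega)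
      refine le_trans habs ?_
      simp only [hgdef]
      have hc1 : (1:ℝ) ≤ ((c:ℤ):ℝ) := by exact_mod_cast (by omega : (1:ℤ) ≤ c)
      have hcc : ((c + 1 : ℤ):ℝ) = (c:ℝ) + 1 := by push_cast; ring
      rw [hcc]
      apply div_le_div₀ (by norm_num) hsin1 (by nlinarith [Real.pi_pos])
      nlinarith [Real.pi_pos]
    -- symmetric part
    have hsym := sym_bound u hu0' hu1 c hc2
    have hcR : ((N:ℤ):ℝ) ≤ (c:ℝ) := by exact_mod_cast hcN
    have hNc : (0:ℝ) < (c:ℝ) := by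
      have : (0:ℤ) < c := by omega
      exact_mod_cast this
    calc |R + ∑ n ∈ Finset.Icc (-c) c, sinc (u - n) - 1|
        ≤ |R| + |∑ n ∈ Finset.Icc (-c) c, sinc (u - n) - 1| := by
          have := abs_add_le R (∑ n ∈ Finset.Icc (-c) c, sinc (u - n) - 1)
          calc |R + ∑ n ∈ Finset.Icc (-c) c, sinc (u - n) - 1|
              = |R + (∑ n ∈ Finset.Icc (-c) c, sinc (u - n) - 1)| := by rw [add_sub_assoc]
            _ ≤ _ := this
      _ ≤ 1 / (π * c) + 2 / (π * c) := add_le_add hRbound hsym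
      _ = 3 / (π * c) := by ring
      _ ≤ 2 / (N : ℝ) := by
          rw [div_le_div_iff₀ (by nlinarith [Real.pi_pos]) hNR]
          have h3 : (3:ℝ) < π := Real.pi_gt_three
          have : ((N:ℤ):ℝ) = (N:ℝ) := by push_cast; rfl
          rw [this] at hcR
          nlinarith

theorem f0_close_to_one :
    ∃ C > (0 : ℝ), ∃ N₀ : ℕ, ∀ N : ℕ, N₀ ≤ N → ∀ x : ℝ, |x| ≤ N →
      1 - C / N ≤ ∑ n ∈ Finset.Icc (-(2 * N : ℤ)) (2 * N), _root_.sinc (x - n) ∧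
      ∑ n ∈ Finset.Icc (-(2 * N : ℤ)) (2 * N), _root_.sinc (x - n) ≤ 1 + C / N := by
  refine ⟨2, by norm_num, 4, ?_⟩
  intro N hN x hx
  have key : |∑ n ∈ Finset.Icc (-(2 * N : ℤ)) (2 * N), sinc (x - n) - 1| ≤ 2 / (N : ℝ) := by
    rcases le_or_gt 0 x with h | h
    · exact key_bound N hN x h (by rwa [abs_of_nonneg h] at hx)
    · rw [sum_reflect x (2 * N)]
      exact key_bound N hN (-x) (by linarith) (by rwa [abs_of_neg h] at hx)
  have h1 := (abs_le.mp key).1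
  have h2 := (abs_le.mp key).2
  constructor <;> linarith
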